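/- Let H be a cocommutative Hopf algebra and C ⊆ ker ε_H a Yetter-Drinfel'd submodule (a subspace closed under the right adjoint action and under the coaction h ↦ h_{(1)} ⊗ h_{(2)} − 1 ⊗ h). Then Ĉ := k·1_H ⊕ C is a rack bialgebra with respect to the restriction of Δ_H and the adjoint action ◁: it is a counital coaugmented coalgebra, ◁ is a coalgebra morphism satisfying (x ◁ y) ◁ z = (x ◁ z_{(1)}) ◁ (y ◁ z_{(2)}), x ◁ 1 = x, 1 ◁ x = ε(x)·1, and ε(x ◁ y) = ε(x)ε(y). -/

import Mathlib

open TensorProduct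
set_option maxHeartbeats 1000000

variable (k : Type) [Field k]

/-- The right adjoint action `a ⊗ b ↦ S(b₁) a b₂` of a Hopf algebra on itself. -/
noncomputable def adAct (H : Type) [Ring H] [HopfAlgebra k H] :
    H ⊗[k] H →ₗ[k] H :=
  LinearMap.mul' k H ∘ₗ
    TensorProduct.map
      (LinearMap.mul' k H ∘ₗ
        TensorProduct.map (HopfAlgebra.antipode (R := k)) LinearMap.id ∘ₗ
        (TensorProduct.comm k H H).toLinearMap)
      LinearMap.id ∘ₗ
    (TensorProduct.assoc k H H H).symm.toLinearMap ∘ₗ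
    TensorProduct.map LinearMap.id (Coalgebra.comul (R := k) (A := H))

namespace RackAux
open Coalgebra
variable {k : Type} [Field k]

section Conv

variable {L B : Type} [AddCommGroup L] [Module k L] [Coalgebra k L]
  [Ring B] [Algebra k B]

/-- Convolution product on linear maps from a coalgebra to an algebra. -/
noncomputable def conv (f g : L →ₗ[k] B) : L →ₗ[k] B :=
  LinearMap.mul' k B ∘ₗ TensorProduct.map f g ∘ₗ Coalgebra.comul

/-- The unit of the convolution algebra. -/
noncomputable def cunit : L →ₗ[k] B :=
  Algebra.linearMap k B ∘ₗ Coalgebra.counit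

lemma conv_repr (f g : L →ₗ[k] B) {x : L} {ι : Type*} (r : Repr k x ι) :
    conv f g x = ∑ i ∈ r.index, f (r.left i) * g (r.right i) := by
  simp only [conv, LinearMap.comp_apply, ← r.eq, map_sum, TensorProduct.map_tmul,
    LinearMap.mul'_apply]

lemma sum_counit_smul {x : L} {ι : Type*} (r : Repr k x ι) :
    ∑ i ∈ r.index, Coalgebra.counit (R := k) (r.left i) • r.right i = x := by
  have h := congrArg (TensorProduct.lid k L) (Coalgebra.sum_counit_tmul_eq r)
  rw [map_sum] at h
  simp only [TensorProduct.lid_tmul, one_smul] at h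
  exact h

lemma sum_smul_counit {x : L} {ι : Type*} (r : Repr k x ι) :
    ∑ i ∈ r.index, Coalgebra.counit (R := k) (r.right i) • r.left i = x := by
  have h := congrArg (TensorProduct.rid k L) (Coalgebra.sum_tmul_counit_eq r)
  rw [map_sum] at h
  simp only [TensorProduct.rid_tmul, one_smul] at h
  exact h

lemma sum_counit_counit {x : L} {ι : Type*} (r : Repr k x ι) :
    ∑ i ∈ r.index, Coalgebra.counit (R := k) (r.left i) *
      Coalgebra.counit (R := k) (r.right i) = Coalgebra.counit (R := k) x := by
  have h := congrArg (Coalgebra.counit (R := k)) (sum_counit_smul r)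
  simpa [map_sum, smul_eq_mul] using h

lemma cunit_conv (f : L →ₗ[k] B) : conv cunit f = f := by
  ext x
  rw [conv_repr _ _ (ℛ k x)]
  calc ∑ i ∈ (ℛ k x).index, cunit ((ℛ k x).left i) * f ((ℛ k x).right i)
      = ∑ i ∈ (ℛ k x).index, f (Coalgebra.counit (R := k) ((ℛ k x).left i) • (ℛ k x).right i) := by
        refine Finset.sum_congr rfl fun i _ => ?_
        simp [cunit, Algebra.smul_def]
    _ = f x := by rw [← map_sum, sum_counit_smul]

lemma conv_cunit (f : L →ₗ[k] B) : conv f cunit = f := by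
  ext x
  rw [conv_repr _ _ (ℛ k x)]
  calc ∑ i ∈ (ℛ k x).index, f ((ℛ k x).left i) * cunit ((ℛ k x).right i)
      = ∑ i ∈ (ℛ k x).index, f (Coalgebra.counit (R := k) ((ℛ k x).right i) • (ℛ k x).left i) := by
        refine Finset.sum_congr rfl fun i _ => ?_
        simp [cunit, Algebra.smul_def, ← Algebra.commutes]
    _ = f x := by rw [← map_sum, sum_smul_counit]

lemma conv_assoc (f g h : L →ₗ[k] B) : conv (conv f g) h = conv f (conv g h) := by
  ext x
  have key := Coalgebra.sum_map_tmul_tmul_eq (R := k) f g h x (repr := ℛ k x)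
      (a₁ := fun i => ℛ k ((ℛ k x).left i)) (a₂ := fun i => ℛ k ((ℛ k x).right i))
  have key2 := congrArg (LinearMap.mul' k B ∘ₗ LinearMap.lTensor B (LinearMap.mul' k B)) key
  simp only [map_sum, LinearMap.comp_apply, LinearMap.lTensor_tmul, LinearMap.mul'_apply] at key2
  rw [conv_repr _ h (ℛ k x), conv_repr f _ (ℛ k x)]
  calc ∑ i ∈ (ℛ k x).index, conv f g ((ℛ k x).left i) * h ((ℛ k x).right i)
      = ∑ i ∈ (ℛ k x).index, ∑ j ∈ (ℛ k ((ℛ k x).left i)).index,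
          f ((ℛ k ((ℛ k x).left i)).left j) * ((g ((ℛ k ((ℛ k x).left i)).right j)) *
            h ((ℛ k x).right i)) := by
        refine Finset.sum_congr rfl fun i _ => ?_
        rw [conv_repr f g (ℛ k ((ℛ k x).left i)), Finset.sum_mul]
        simp [mul_assoc]
    _ = ∑ i ∈ (ℛ k x).index, ∑ j ∈ (ℛ k ((ℛ k x).right i)).index,
          f ((ℛ k x).left i) * (g ((ℛ k ((ℛ k x).right i)).left j) *
            h ((ℛ k ((ℛ k x).right i)).right j)) := key2.symm
    _ = ∑ i ∈ (ℛ k x).index, f ((ℛ k x).left i) * conv g h ((ℛ k x).right i) := by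
        refine Finset.sum_congr rfl fun i _ => ?_
        rw [conv_repr g h (ℛ k ((ℛ k x).right i)), Finset.mul_sum]

/-- Swapped representation, using cocommutativity. -/
noncomputable def Repr.swap
    (hcoc : ∀ y : L, TensorProduct.comm k L L (Coalgebra.comul (R := k) y) =
      Coalgebra.comul (R := k) y) {x : L} {ι : Type*} (r : Repr k x ι) : Repr k x ι :=
  ⟨r.index, r.right, r.left, by
    have := congrArg (TensorProduct.comm k L L) r.eq
    simpa [map_sum, hcoc x] using this⟩

@[simp] lemma Repr.swap_index (hcoc : ∀ y : L, TensorProduct.comm k L L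
      (Coalgebra.comul (R := k) y) = Coalgebra.comul (R := k) y) {x : L} {ι : Type*} (r : Repr k x ι) :
    (Repr.swap hcoc r).index = r.index := rfl

@[simp] lemma Repr.swap_left (hcoc : ∀ y : L, TensorProduct.comm k L L
      (Coalgebra.comul (R := k) y) = Coalgebra.comul (R := k) y) {x : L} {ι : Type*} (r : Repr k x ι) :
    (Repr.swap hcoc r).left = r.right := rfl

@[simp] lemma Repr.swap_right (hcoc : ∀ y : L, TensorProduct.comm k L L
      (Coalgebra.comul (R := k) y) = Coalgebra.comul (R := k) y) {x : L} {ι : Type*} (r : Repr k x ι) :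
    (Repr.swap hcoc r).right = r.left := rfl

lemma conv_comm
    (hcoc : ∀ y : L, TensorProduct.comm k L L (Coalgebra.comul (R := k) y) =
      Coalgebra.comul (R := k) y)
    (f g : L →ₗ[k] B) (hc : ∀ a b, f a * g b = g b * f a) : conv f g = conv g f := by
  ext x
  rw [conv_repr f g (Repr.swap hcoc (ℛ k x)), conv_repr g f (ℛ k x)]
  exact Finset.sum_congr rfl fun i _ => hc _ _

lemma comp_conv {B' : Type} [Ring B'] [Algebra k B'] (φ : B →ₗ[k] B')
    (hm : ∀ a b : B, φ (a * b) = φ a * φ b) (f g : L →ₗ[k] B) :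
    φ ∘ₗ conv f g = conv (φ ∘ₗ f) (φ ∘ₗ g) := by
  ext x
  rw [LinearMap.comp_apply, conv_repr f g (ℛ k x), conv_repr _ _ (ℛ k x), map_sum]
  exact Finset.sum_congr rfl fun i _ => hm _ _

lemma conv_comp {L' : Type} [AddCommGroup L'] [Module k L'] [Coalgebra k L']
    (ψ : L' →ₗ[k] L)
    (hψ : ∀ x : L', Coalgebra.comul (R := k) (ψ x) =
      TensorProduct.map ψ ψ (Coalgebra.comul (R := k) x)) (f g : L →ₗ[k] B) :
    conv f g ∘ₗ ψ = conv (f ∘ₗ ψ) (g ∘ₗ ψ) := by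
  ext x
  have hr : ∑ i ∈ (ℛ k x).index, ψ ((ℛ k x).left i) ⊗ₜ[k] ψ ((ℛ k x).right i) =
      Coalgebra.comul (R := k) (ψ x) := by
    rw [hψ, ← (ℛ k x).eq, map_sum]; simp
  rw [LinearMap.comp_apply, conv_repr f g ⟨(ℛ k x).index, _, _, hr⟩, conv_repr _ _ (ℛ k x)]
  simp

lemma conv_unique (f g h : L →ₗ[k] B) (h1 : conv f g = cunit) (h2 : conv h f = cunit) :
    g = h := by
  have : conv h (conv f g) = conv (conv h f) g := (conv_assoc h f g).symm
  rw [h1, h2, conv_cunit, cunit_conv] at this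
  exact this.symm

lemma conv_mulRight (y : B) (f g : L →ₗ[k] B) :
    conv f (LinearMap.mulRight k y ∘ₗ g) = LinearMap.mulRight k y ∘ₗ conv f g := by
  ext x
  rw [LinearMap.comp_apply, conv_repr _ _ (ℛ k x), conv_repr f g (ℛ k x)]
  simp [LinearMap.mulRight_apply, Finset.sum_mul, mul_assoc]

lemma conv_exchange
    (hcoc : ∀ y : L, TensorProduct.comm k L L (Coalgebra.comul (R := k) y) =
      Coalgebra.comul (R := k) y)
    (f₁ f₂ g₁ g₂ : L →ₗ[k] B) (hc : ∀ a b, f₂ a * g₁ b = g₁ b * f₂ a) :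
    conv (conv f₁ f₂) (conv g₁ g₂) = conv (conv f₁ g₁) (conv f₂ g₂) := by
  rw [conv_assoc f₁ f₂ (conv g₁ g₂), ← conv_assoc f₂ g₁ g₂, conv_comm hcoc f₂ g₁ hc,
    conv_assoc g₁ f₂ g₂, ← conv_assoc f₁ g₁ (conv f₂ g₂)]

end Conv
section Hopf
variable {H : Type} [Ring H] [HopfAlgebra k H]

/-- A `Repr` of `1`. -/
noncomputable def oneRepr : Repr k (1 : H) Unit :=
  ⟨(Finset.univ : Finset Unit), fun _ => 1, fun _ => 1, by
    simp [Bialgebra.comul_one, Algebra.TensorProduct.one_def]⟩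

lemma antipode_one : HopfAlgebra.antipode (R := k) (1 : H) = 1 := by
  have h := HopfAlgebra.sum_antipode_mul_eq_algebraMap_counit (R := k) (oneRepr (H := H))
  simpa [oneRepr] using h

lemma counit_antipode (b : H) :
    Coalgebra.counit (R := k) (HopfAlgebra.antipode (R := k) b) =
      Coalgebra.counit (R := k) b := by
  have hb := sum_smul_counit (ℛ k b)
  have h2 := congrArg (Coalgebra.counit (R := k)) (HopfAlgebra.sum_antipode_mul_eq_algebraMap_counit (R := k) (ℛ k b))
  rw [map_sum] at h2
  simp only [Bialgebra.counit_mul] at h2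
  conv_lhs => rw [← hb]
  rw [map_sum, map_sum]
  simp only [map_smul, smul_eq_mul]
  calc ∑ i ∈ (ℛ k b).index, Coalgebra.counit (R := k) ((ℛ k b).right i) *
        Coalgebra.counit (R := k) (HopfAlgebra.antipode (R := k) ((ℛ k b).left i))
      = ∑ i ∈ (ℛ k b).index,
          Coalgebra.counit (R := k) (HopfAlgebra.antipode (R := k) ((ℛ k b).left i)) *
          Coalgebra.counit (R := k) ((ℛ k b).right i) := by
        exact Finset.sum_congr rfl fun i _ => mul_comm _ _
    _ = Coalgebra.counit (R := k) b := by
        rw [h2]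
        simp [Algebra.smul_def]

lemma sum_tmul_repr {a b : H} {ι κ : Type*} (ra : Repr k a ι) (rb : Repr k b κ) :
    ∑ i ∈ ra.index, ∑ j ∈ rb.index,
      ((ra.left i ⊗ₜ[k] rb.left j) ⊗ₜ[k] (ra.right i ⊗ₜ[k] rb.right j)) =
      Coalgebra.comul (R := k) (a ⊗ₜ[k] b) := by
  have : Coalgebra.comul (R := k) (a ⊗ₜ[k] b) =
      TensorProduct.tensorTensorTensorComm k H H H H
        (Coalgebra.comul (R := k) a ⊗ₜ[k] Coalgebra.comul (R := k) b) := rfl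
  rw [this, ← ra.eq, ← rb.eq]
  rw [sum_tmul, map_sum]
  refine Finset.sum_congr rfl fun i _ => ?_
  rw [tmul_sum, map_sum]
  refine Finset.sum_congr rfl fun j _ => ?_
  simp

/-- Repr of a pure tensor. -/
noncomputable def tmulRepr {a b : H} {ι κ : Type*} (ra : Repr k a ι) (rb : Repr k b κ) :
    Repr k (a ⊗ₜ[k] b) (ι × κ) :=
  ⟨ra.index ×ˢ rb.index, fun p => ra.left p.1 ⊗ₜ[k] rb.left p.2,
    fun p => ra.right p.1 ⊗ₜ[k] rb.right p.2, by
      rw [Finset.sum_product]; exact sum_tmul_repr ra rb⟩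

/-- Repr of a product. -/
noncomputable def prodRepr {a b : H} {ι κ : Type*} (ra : Repr k a ι) (rb : Repr k b κ) :
    Repr k (a * b) (ι × κ) :=
  ⟨ra.index ×ˢ rb.index, fun p => ra.left p.1 * rb.left p.2,
    fun p => ra.right p.1 * rb.right p.2, by
      rw [Finset.sum_product]
      rw [Bialgebra.comul_mul, ← ra.eq, ← rb.eq, Finset.sum_mul_sum]
      simp [Algebra.TensorProduct.tmul_mul_tmul]⟩

lemma adAct_repr (a b : H) {ι : Type*} (r : Repr k b ι) :
    adAct k H (a ⊗ₜ[k] b) = ∑ i ∈ r.index,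
      HopfAlgebra.antipode (R := k) (r.left i) * a * r.right i := by
  unfold adAct
  simp only [LinearMap.comp_apply, LinearEquiv.coe_coe, TensorProduct.map_tmul,
    LinearMap.id_coe, id_eq, ← r.eq, tmul_sum, map_sum]
  refine Finset.sum_congr rfl fun i _ => ?_
  simp [mul_assoc]

end Hopf
section Hopf2
variable {H : Type} [Ring H] [HopfAlgebra k H]

local notation "𝒮" => HopfAlgebra.antipode (R := k) (A := H)
local notation "Δ" => Coalgebra.comul (R := k) (A := H)
local notation "ε" => Coalgebra.counit (R := k) (A := H)

noncomputable def p₁ : H ⊗[k] H →ₗ[k] H :=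
  (TensorProduct.rid k H).toLinearMap ∘ₗ LinearMap.lTensor H (Coalgebra.counit (R := k))

noncomputable def p₂ : H ⊗[k] H →ₗ[k] H :=
  (TensorProduct.lid k H).toLinearMap ∘ₗ LinearMap.rTensor H (Coalgebra.counit (R := k))

noncomputable def d₁ : H →ₗ[k] H ⊗[k] H :=
  (Algebra.TensorProduct.includeLeft : H →ₐ[k] H ⊗[k] H).toLinearMap

noncomputable def d₂ : H →ₗ[k] H ⊗[k] H :=
  (Algebra.TensorProduct.includeRight : H →ₐ[k] H ⊗[k] H).toLinearMap

@[simp] lemma p₁_tmul (a b : H) : (p₁ : H ⊗[k] H →ₗ[k] H) (a ⊗ₜ b) =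
    Coalgebra.counit (R := k) b • a := by simp [p₁]

@[simp] lemma p₂_tmul (a b : H) : (p₂ : H ⊗[k] H →ₗ[k] H) (a ⊗ₜ b) =
    Coalgebra.counit (R := k) a • b := by simp [p₂]

@[simp] lemma d₁_apply (a : H) : (d₁ : H →ₗ[k] H ⊗[k] H) a = a ⊗ₜ 1 := rfl
@[simp] lemma d₂_apply (a : H) : (d₂ : H →ₗ[k] H ⊗[k] H) a = 1 ⊗ₜ a := rfl

lemma d_commute (u v : H) : (d₁ (k := k) u) * (d₂ v) = (d₂ v) * (d₁ u) := by
  simp [Algebra.TensorProduct.tmul_mul_tmul]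

lemma conv_S_id : conv 𝒮 LinearMap.id = (cunit : H →ₗ[k] H) := by
  have h := HopfAlgebra.mul_antipode_rTensor_comul (R := k) (A := H)
  rw [conv, cunit,
    show (TensorProduct.map 𝒮 (LinearMap.id : H →ₗ[k] H)) =
      LinearMap.rTensor H (HopfAlgebra.antipode (R := k)) from rfl, h]

lemma conv_id_S : conv LinearMap.id 𝒮 = (cunit : H →ₗ[k] H) := by
  have h := HopfAlgebra.mul_antipode_lTensor_comul (R := k) (A := H)
  rw [conv, cunit,
    show (TensorProduct.map (LinearMap.id : H →ₗ[k] H) 𝒮) =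
      LinearMap.lTensor H (HopfAlgebra.antipode (R := k)) from rfl, h]

-- counit compositions
lemma counit_tmul (a b : H) :
    Coalgebra.counit (R := k) (a ⊗ₜ[k] b) = Coalgebra.counit (R := k) a *
      Coalgebra.counit (R := k) b := by
  rw [_root_.TensorProduct.counit_tmul, smul_eq_mul, mul_comm]

lemma cunit_comp_p₁ : (cunit : H →ₗ[k] H) ∘ₗ p₁ = (cunit : H ⊗[k] H →ₗ[k] H) := by
  apply TensorProduct.ext'
  intro a b
  simp only [LinearMap.comp_apply, p₁_tmul, cunit, counit_tmul, map_smul,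
    Algebra.linearMap_apply, map_mul]
  rw [Algebra.smul_def, ← map_mul (algebraMap k H), ← map_mul (algebraMap k H), mul_comm]

lemma cunit_comp_p₂ : (cunit : H →ₗ[k] H) ∘ₗ p₂ = (cunit : H ⊗[k] H →ₗ[k] H) := by
  apply TensorProduct.ext'
  intro a b
  simp [cunit, counit_tmul, Algebra.smul_def]
  exact Algebra.commutes _ _

lemma cunit_comp_mul' : (cunit : H →ₗ[k] H) ∘ₗ LinearMap.mul' k H =
    (cunit : H ⊗[k] H →ₗ[k] H) := by
  apply TensorProduct.ext'
  intro a b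
  simp [cunit, counit_tmul]
  exact Algebra.commutes _ _

lemma d₁_comp_cunit : (d₁ : H →ₗ[k] H ⊗[k] H) ∘ₗ (cunit : H →ₗ[k] H) =
    (cunit : H →ₗ[k] H ⊗[k] H) := by
  ext x
  simp [cunit, Algebra.TensorProduct.one_def, Algebra.algebraMap_eq_smul_one, smul_tmul']

lemma d₂_comp_cunit : (d₂ : H →ₗ[k] H ⊗[k] H) ∘ₗ (cunit : H →ₗ[k] H) =
    (cunit : H →ₗ[k] H ⊗[k] H) := by
  ext x
  simp [cunit, Algebra.TensorProduct.one_def, Algebra.algebraMap_eq_smul_one, tmul_smul]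

lemma comul_comp_cunit : Δ ∘ₗ (cunit : H →ₗ[k] H) = (cunit : H →ₗ[k] H ⊗[k] H) := by
  ext x
  simp [cunit, Algebra.algebraMap_eq_smul_one, Bialgebra.comul_one]

-- coalgebra morphism properties (pointwise form)
lemma comul_p₁ (t : H ⊗[k] H) :
    Coalgebra.comul (R := k) ((p₁ : H ⊗[k] H →ₗ[k] H) t) =
      TensorProduct.map p₁ p₁ (Coalgebra.comul (R := k) t) := by
  revert t
  suffices h : Δ ∘ₗ (p₁ : H ⊗[k] H →ₗ[k] H) =
      TensorProduct.map p₁ p₁ ∘ₗ Coalgebra.comul (R := k) by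
    intro t; exact LinearMap.congr_fun h t
  apply TensorProduct.ext'
  intro a b
  rw [LinearMap.comp_apply, LinearMap.comp_apply, ← sum_tmul_repr (ℛ k a) (ℛ k b), map_sum]
  simp only [map_sum, TensorProduct.map_tmul, p₁_tmul]
  symm
  calc ∑ i ∈ (ℛ k a).index, ∑ j ∈ (ℛ k b).index,
        (Coalgebra.counit (R := k) ((ℛ k b).left j) • (ℛ k a).left i) ⊗ₜ[k]
        (Coalgebra.counit (R := k) ((ℛ k b).right j) • (ℛ k a).right i)
      = ∑ i ∈ (ℛ k a).index, (∑ j ∈ (ℛ k b).index,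
          Coalgebra.counit (R := k) ((ℛ k b).left j) *
          Coalgebra.counit (R := k) ((ℛ k b).right j)) • ((ℛ k a).left i ⊗ₜ[k] (ℛ k a).right i) := by
        refine Finset.sum_congr rfl fun i _ => ?_
        rw [Finset.sum_smul]
        refine Finset.sum_congr rfl fun j _ => ?_
        simp [tmul_smul, smul_tmul', smul_smul, mul_comm]
    _ = Coalgebra.comul (R := k) (Coalgebra.counit (R := k) b • a) := by
        rw [sum_counit_counit (ℛ k b), map_smul, ← Finset.smul_sum, (ℛ k a).eq]

lemma comul_p₂ (t : H ⊗[k] H) :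
    Coalgebra.comul (R := k) ((p₂ : H ⊗[k] H →ₗ[k] H) t) =
      TensorProduct.map p₂ p₂ (Coalgebra.comul (R := k) t) := by
  revert t
  suffices h : Δ ∘ₗ (p₂ : H ⊗[k] H →ₗ[k] H) =
      TensorProduct.map p₂ p₂ ∘ₗ Coalgebra.comul (R := k) by
    intro t; exact LinearMap.congr_fun h t
  apply TensorProduct.ext'
  intro a b
  rw [LinearMap.comp_apply, LinearMap.comp_apply, ← sum_tmul_repr (ℛ k a) (ℛ k b), map_sum]
  simp only [map_sum, TensorProduct.map_tmul, p₂_tmul]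
  symm
  calc ∑ i ∈ (ℛ k a).index, ∑ j ∈ (ℛ k b).index,
        (Coalgebra.counit (R := k) ((ℛ k a).left i) • (ℛ k b).left j) ⊗ₜ[k]
        (Coalgebra.counit (R := k) ((ℛ k a).right i) • (ℛ k b).right j)
      = ∑ i ∈ (ℛ k a).index, (Coalgebra.counit (R := k) ((ℛ k a).left i) *
          Coalgebra.counit (R := k) ((ℛ k a).right i)) •
            (∑ j ∈ (ℛ k b).index, (ℛ k b).left j ⊗ₜ[k] (ℛ k b).right j) := by
        refine Finset.sum_congr rfl fun i _ => ?_
        rw [Finset.smul_sum]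
        refine Finset.sum_congr rfl fun j _ => ?_
        simp [tmul_smul, smul_tmul', smul_smul, mul_comm]
    _ = Coalgebra.comul (R := k) (Coalgebra.counit (R := k) a • b) := by
        rw [← Finset.sum_smul, sum_counit_counit (ℛ k a), (ℛ k b).eq, map_smul]

lemma comul_mul'_pt (t : H ⊗[k] H) :
    Coalgebra.comul (R := k) (LinearMap.mul' k H t) =
      TensorProduct.map (LinearMap.mul' k H) (LinearMap.mul' k H)
        (Coalgebra.comul (R := k) t) := by
  revert t
  suffices h : Δ ∘ₗ LinearMap.mul' k H =
      TensorProduct.map (LinearMap.mul' k H) (LinearMap.mul' k H) ∘ₗ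
        Coalgebra.comul (R := k) by
    intro t; exact LinearMap.congr_fun h t
  apply TensorProduct.ext'
  intro a b
  rw [LinearMap.comp_apply, LinearMap.comp_apply, ← sum_tmul_repr (ℛ k a) (ℛ k b), map_sum]
  simp only [map_sum, TensorProduct.map_tmul, LinearMap.mul'_apply]
  rw [Bialgebra.comul_mul, ← (ℛ k a).eq, ← (ℛ k b).eq, Finset.sum_mul_sum]
  simp [Algebra.TensorProduct.tmul_mul_tmul]

end Hopf2
section Hopf3
variable {H : Type} [Ring H] [HopfAlgebra k H]

local notation "𝒮" => HopfAlgebra.antipode (R := k) (A := H)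

lemma comul_eq_conv : (Coalgebra.comul (R := k) (A := H)) = conv d₁ d₂ := by
  ext x
  rw [conv_repr _ _ (ℛ k x), ← (ℛ k x).eq]
  simp [Algebra.TensorProduct.tmul_mul_tmul]

lemma mul'_eq_conv : LinearMap.mul' k H = conv p₁ p₂ := by
  apply TensorProduct.ext'
  intro a b
  rw [LinearMap.mul'_apply, conv_repr _ _ (tmulRepr (ℛ k a) (ℛ k b))]
  simp only [tmulRepr]
  rw [Finset.sum_product]
  simp only [p₁_tmul, p₂_tmul]
  calc (a : H) * b = (∑ i ∈ (ℛ k a).index,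
          Coalgebra.counit (R := k) ((ℛ k a).right i) • (ℛ k a).left i) *
        (∑ j ∈ (ℛ k b).index,
          Coalgebra.counit (R := k) ((ℛ k b).left j) • (ℛ k b).right j) := by
        rw [sum_smul_counit (ℛ k a), sum_counit_smul (ℛ k b)]
    _ = ∑ i ∈ (ℛ k a).index, ∑ j ∈ (ℛ k b).index,
          (Coalgebra.counit (R := k) ((ℛ k b).left j) • (ℛ k a).left i) *
          (Coalgebra.counit (R := k) ((ℛ k a).right i) • (ℛ k b).right j) := by
        rw [Finset.sum_mul_sum]
        refine Finset.sum_congr rfl fun i _ => Finset.sum_congr rfl fun j _ => ?_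
        simp [smul_mul_assoc, mul_smul_comm, smul_smul, mul_comm]

noncomputable def rho : H ⊗[k] H →ₗ[k] H :=
  LinearMap.mul' k H ∘ₗ TensorProduct.map 𝒮 𝒮 ∘ₗ (TensorProduct.comm k H H).toLinearMap

lemma rho_eq : (rho : H ⊗[k] H →ₗ[k] H) = conv (𝒮 ∘ₗ p₂) (𝒮 ∘ₗ p₁) := by
  apply TensorProduct.ext'
  intro a b
  rw [conv_repr _ _ (tmulRepr (ℛ k a) (ℛ k b))]
  simp only [tmulRepr]
  rw [Finset.sum_product]
  simp only [LinearMap.comp_apply, p₁_tmul, p₂_tmul, map_smul]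
  calc rho (a ⊗ₜ[k] b)
      = (∑ j ∈ (ℛ k b).index, Coalgebra.counit (R := k) ((ℛ k b).right j) •
          𝒮 ((ℛ k b).left j)) *
        (∑ i ∈ (ℛ k a).index, Coalgebra.counit (R := k) ((ℛ k a).left i) •
          𝒮 ((ℛ k a).right i)) := by
        have hb : ∑ j ∈ (ℛ k b).index, Coalgebra.counit (R := k) ((ℛ k b).right j) •
            𝒮 ((ℛ k b).left j) = 𝒮 b := by
          rw [show ∑ j ∈ (ℛ k b).index, Coalgebra.counit (R := k) ((ℛ k b).right j) •
              𝒮 ((ℛ k b).left j) = 𝒮 (∑ j ∈ (ℛ k b).index,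
                Coalgebra.counit (R := k) ((ℛ k b).right j) • (ℛ k b).left j) by
            rw [map_sum]; simp only [map_smul]]
          rw [sum_smul_counit]
        have ha : ∑ i ∈ (ℛ k a).index, Coalgebra.counit (R := k) ((ℛ k a).left i) •
            𝒮 ((ℛ k a).right i) = 𝒮 a := by
          rw [show ∑ i ∈ (ℛ k a).index, Coalgebra.counit (R := k) ((ℛ k a).left i) •
              𝒮 ((ℛ k a).right i) = 𝒮 (∑ i ∈ (ℛ k a).index,
                Coalgebra.counit (R := k) ((ℛ k a).left i) • (ℛ k a).right i) by
            rw [map_sum]; simp only [map_smul]]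
          rw [sum_counit_smul]
        rw [hb, ha]
        simp [rho]
    _ = ∑ j ∈ (ℛ k b).index, ∑ i ∈ (ℛ k a).index,
          (Coalgebra.counit (R := k) ((ℛ k a).left i) • 𝒮 ((ℛ k b).left j)) *
          (Coalgebra.counit (R := k) ((ℛ k b).right j) • 𝒮 ((ℛ k a).right i)) := by
        rw [Finset.sum_mul_sum]
        refine Finset.sum_congr rfl fun j _ => Finset.sum_congr rfl fun i _ => ?_
        simp [smul_mul_assoc, mul_smul_comm, smul_smul, mul_comm]
    _ = ∑ i ∈ (ℛ k a).index, ∑ j ∈ (ℛ k b).index,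
          (Coalgebra.counit (R := k) ((ℛ k a).left i) • 𝒮 ((ℛ k b).left j)) *
          (Coalgebra.counit (R := k) ((ℛ k b).right j) • 𝒮 ((ℛ k a).right i)) :=
        Finset.sum_comm

lemma S_comp_mul' : 𝒮 ∘ₗ LinearMap.mul' k H = (rho : H ⊗[k] H →ₗ[k] H) := by
  have hd₁ : ∀ a b : H, d₁ (k := k) (a * b) = d₁ a * d₁ b := by
    intro a b; simp [Algebra.TensorProduct.tmul_mul_tmul]
  have h2 : conv (𝒮 ∘ₗ LinearMap.mul' k H) (LinearMap.mul' k H) = cunit := by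
    have h := conv_comp (ψ := LinearMap.mul' k H) comul_mul'_pt 𝒮 LinearMap.id
    rw [conv_S_id, LinearMap.id_comp, cunit_comp_mul'] at h
    exact h.symm
  have h1 : conv (LinearMap.mul' k H) (rho : H ⊗[k] H →ₗ[k] H) = cunit := by
    rw [mul'_eq_conv, rho_eq, conv_assoc, ← conv_assoc p₂ (𝒮 ∘ₗ p₂) (𝒮 ∘ₗ p₁)]
    have h := conv_comp (ψ := (p₂ : H ⊗[k] H →ₗ[k] H)) comul_p₂ LinearMap.id 𝒮
    rw [conv_id_S, LinearMap.id_comp, cunit_comp_p₂] at h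
    rw [← h, cunit_conv]
    have h' := conv_comp (ψ := (p₁ : H ⊗[k] H →ₗ[k] H)) comul_p₁ LinearMap.id 𝒮
    rw [conv_id_S, LinearMap.id_comp, cunit_comp_p₁] at h'
    exact h'.symm
  exact (conv_unique (LinearMap.mul' k H) _ _ h1 h2).symm

lemma antipode_mul (a b : H) : 𝒮 (a * b) = 𝒮 b * 𝒮 a := by
  have := LinearMap.congr_fun S_comp_mul' (a ⊗ₜ[k] b)
  simpa [rho] using this

section Cocomm
variable (hcoc : ∀ x : H, TensorProduct.comm k H H (Coalgebra.comul (R := k) x) =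
    Coalgebra.comul (R := k) x)

include hcoc

lemma comul_S : (Coalgebra.comul (R := k) (A := H)) ∘ₗ 𝒮 =
    TensorProduct.map 𝒮 𝒮 ∘ₗ Coalgebra.comul (R := k) := by
  have hΔm : ∀ a b : H, Coalgebra.comul (R := k) (a * b) =
      Coalgebra.comul (R := k) a * Coalgebra.comul (R := k) b := fun a b =>
    Bialgebra.comul_mul a b
  have hd₁ : ∀ a b : H, d₁ (k := k) (a * b) = d₁ a * d₁ b := by
    intro a b; simp [Algebra.TensorProduct.tmul_mul_tmul]
  have hd₂ : ∀ a b : H, d₂ (k := k) (a * b) = d₂ a * d₂ b := by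
    intro a b; simp [Algebra.TensorProduct.tmul_mul_tmul]
  have w'_eq : conv (d₁ ∘ₗ 𝒮) (d₂ ∘ₗ 𝒮) =
      TensorProduct.map 𝒮 𝒮 ∘ₗ Coalgebra.comul (R := k) := by
    ext x
    rw [conv_repr _ _ (ℛ k x), LinearMap.comp_apply, ← (ℛ k x).eq, map_sum]
    simp [Algebra.TensorProduct.tmul_mul_tmul]
  have hB : conv (Coalgebra.comul (R := k) (A := H))
      ((Coalgebra.comul (R := k) (A := H)) ∘ₗ 𝒮) = cunit := by
    have h := comp_conv (φ := (Coalgebra.comul (R := k) (A := H))) hΔm LinearMap.id 𝒮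
    rw [conv_id_S, LinearMap.comp_id, comul_comp_cunit] at h
    exact h.symm
  have hC : conv (conv (d₁ ∘ₗ 𝒮) (d₂ ∘ₗ 𝒮)) (Coalgebra.comul (R := k) (A := H)) = cunit := by
    rw [comul_eq_conv,
      conv_exchange hcoc _ _ _ _ (fun a b => (d_commute b (𝒮 a)).symm)]
    have h := comp_conv (φ := (d₁ : H →ₗ[k] H ⊗[k] H)) hd₁ 𝒮 LinearMap.id
    rw [conv_S_id, LinearMap.comp_id, d₁_comp_cunit] at h
    have h' := comp_conv (φ := (d₂ : H →ₗ[k] H ⊗[k] H)) hd₂ 𝒮 LinearMap.id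
    rw [conv_S_id, LinearMap.comp_id, d₂_comp_cunit] at h'
    rw [← h, ← h', cunit_conv]
  rw [conv_unique (Coalgebra.comul (R := k) (A := H)) _ _ hB hC, w'_eq]

end Cocomm

lemma adAct_eq : adAct k H = conv (𝒮 ∘ₗ p₂) (LinearMap.mul' k H) := by
  apply TensorProduct.ext'
  intro a b
  rw [adAct_repr a b (ℛ k b), conv_repr _ _ (tmulRepr (ℛ k a) (ℛ k b))]
  simp only [tmulRepr]
  rw [Finset.sum_product]
  simp only [LinearMap.comp_apply, p₂_tmul, map_smul, LinearMap.mul'_apply]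
  rw [Finset.sum_comm]
  refine Finset.sum_congr rfl fun j _ => ?_
  calc 𝒮 ((ℛ k b).left j) * a * (ℛ k b).right j
      = 𝒮 ((ℛ k b).left j) *
          ((∑ i ∈ (ℛ k a).index, Coalgebra.counit (R := k) ((ℛ k a).left i) •
            (ℛ k a).right i) * (ℛ k b).right j) := by
        rw [sum_counit_smul (ℛ k a), mul_assoc]
    _ = ∑ i ∈ (ℛ k a).index, Coalgebra.counit (R := k) ((ℛ k a).left i) •
          𝒮 ((ℛ k b).left j) * ((ℛ k a).right i * (ℛ k b).right j) := by
        rw [Finset.sum_mul, Finset.mul_sum]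
        refine Finset.sum_congr rfl fun i _ => ?_
        simp [smul_mul_assoc, mul_smul_comm, mul_assoc]

end Hopf3

section Hopf4
variable {H : Type} [Ring H] [HopfAlgebra k H]

local notation "𝒮" => HopfAlgebra.antipode (R := k) (A := H)

lemma conv_dS : conv (d₁ ∘ₗ 𝒮) (d₂ ∘ₗ 𝒮) =
    TensorProduct.map 𝒮 𝒮 ∘ₗ Coalgebra.comul (R := k) := by
  ext x
  rw [conv_repr _ _ (ℛ k x), LinearMap.comp_apply, ← (ℛ k x).eq, map_sum]
  simp [Algebra.TensorProduct.tmul_mul_tmul]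

lemma conv_d₁_d₂ (f g : H ⊗[k] H →ₗ[k] H) :
    conv (d₁ ∘ₗ f) (d₂ ∘ₗ g) =
      TensorProduct.map f g ∘ₗ (Coalgebra.comul (R := k) (A := H ⊗[k] H)) := by
  refine LinearMap.ext fun x => ?_
  rw [conv_repr _ _ (ℛ k x), LinearMap.comp_apply, ← (ℛ k x).eq, map_sum]
  simp [Algebra.TensorProduct.tmul_mul_tmul]

section Cocomm2
variable (hcoc : ∀ x : H, TensorProduct.comm k H H (Coalgebra.comul (R := k) x) =
    Coalgebra.comul (R := k) x)

include hcoc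

lemma hcoc_tensor : ∀ t : H ⊗[k] H,
    TensorProduct.comm k (H ⊗[k] H) (H ⊗[k] H) (Coalgebra.comul (R := k) t) =
      Coalgebra.comul (R := k) t := by
  suffices h : (TensorProduct.comm k (H ⊗[k] H) (H ⊗[k] H)).toLinearMap ∘ₗ
      (Coalgebra.comul (R := k) (A := H ⊗[k] H)) = Coalgebra.comul (R := k) by
    intro t; exact LinearMap.congr_fun h t
  apply TensorProduct.ext'
  intro a b
  rw [LinearMap.comp_apply, LinearEquiv.coe_coe]
  conv_lhs => rw [← sum_tmul_repr (ℛ k a) (ℛ k b)]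
  rw [map_sum]
  simp only [map_sum, TensorProduct.comm_tmul]
  have h := sum_tmul_repr (Repr.swap hcoc (ℛ k a)) (Repr.swap hcoc (ℛ k b))
  simp only [Repr.swap_index, Repr.swap_left, Repr.swap_right] at h
  exact h

lemma comul_comp_adAct :
    (Coalgebra.comul (R := k) (A := H)) ∘ₗ adAct k H =
      TensorProduct.map (adAct k H) (adAct k H) ∘ₗ
        (Coalgebra.comul (R := k) (A := H ⊗[k] H)) := by
  have hΔm : ∀ a b : H, Coalgebra.comul (R := k) (a * b) =
      Coalgebra.comul (R := k) a * Coalgebra.comul (R := k) b := fun a b =>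
    Bialgebra.comul_mul a b
  have hd₁ : ∀ a b : H, d₁ (k := k) (a * b) = d₁ a * d₁ b := by
    intro a b; simp [Algebra.TensorProduct.tmul_mul_tmul]
  have hd₂ : ∀ a b : H, d₂ (k := k) (a * b) = d₂ a * d₂ b := by
    intro a b; simp [Algebra.TensorProduct.tmul_mul_tmul]
  calc (Coalgebra.comul (R := k) (A := H)) ∘ₗ adAct k H
      = (Coalgebra.comul (R := k) (A := H)) ∘ₗ conv (𝒮 ∘ₗ p₂) (LinearMap.mul' k H) := by
        rw [adAct_eq]
    _ = conv ((Coalgebra.comul (R := k) (A := H)) ∘ₗ (𝒮 ∘ₗ p₂))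
          ((Coalgebra.comul (R := k) (A := H)) ∘ₗ LinearMap.mul' k H) :=
        comp_conv _ hΔm _ _
    _ = conv (conv (d₁ ∘ₗ (𝒮 ∘ₗ p₂)) (d₂ ∘ₗ (𝒮 ∘ₗ p₂)))
          (conv (d₁ ∘ₗ LinearMap.mul' k H) (d₂ ∘ₗ LinearMap.mul' k H)) := by
        rw [← LinearMap.comp_assoc, comul_S hcoc, ← conv_dS,
          conv_comp (p₂ : H ⊗[k] H →ₗ[k] H) comul_p₂,
          comul_eq_conv, conv_comp (LinearMap.mul' k H) comul_mul'_pt]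
        simp only [LinearMap.comp_assoc]
    _ = conv (conv (d₁ ∘ₗ (𝒮 ∘ₗ p₂)) (d₁ ∘ₗ LinearMap.mul' k H))
          (conv (d₂ ∘ₗ (𝒮 ∘ₗ p₂)) (d₂ ∘ₗ LinearMap.mul' k H)) :=
        @conv_exchange k _ (H ⊗[k] H) (H ⊗[k] H) _ _ _ _ _ (hcoc_tensor hcoc)
          (d₁ ∘ₗ (𝒮 ∘ₗ p₂)) (d₂ ∘ₗ (𝒮 ∘ₗ p₂)) (d₁ ∘ₗ LinearMap.mul' k H)
          (d₂ ∘ₗ LinearMap.mul' k H)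
          (fun a b => by
            simp only [LinearMap.comp_apply]
            exact (d_commute _ _).symm)
    _ = conv (d₁ ∘ₗ conv (𝒮 ∘ₗ p₂) (LinearMap.mul' k H))
          (d₂ ∘ₗ conv (𝒮 ∘ₗ p₂) (LinearMap.mul' k H)) := by
        rw [comp_conv (d₁ : H →ₗ[k] H ⊗[k] H) hd₁, comp_conv (d₂ : H →ₗ[k] H ⊗[k] H) hd₂]
    _ = TensorProduct.map (adAct k H) (adAct k H) ∘ₗ
          (Coalgebra.comul (R := k) (A := H ⊗[k] H)) := by
        rw [← adAct_eq, conv_d₁_d₂]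

end Cocomm2

lemma adAct_adAct (x y z : H) :
    adAct k H (adAct k H (x ⊗ₜ[k] y) ⊗ₜ[k] z) = adAct k H (x ⊗ₜ[k] (y * z)) := by
  rw [adAct_repr x y (ℛ k y), sum_tmul, map_sum, adAct_repr x (y * z) (prodRepr (ℛ k y) (ℛ k z))]
  simp only [prodRepr]
  rw [Finset.sum_product]
  refine Finset.sum_congr rfl fun i _ => ?_
  rw [adAct_repr _ z (ℛ k z)]
  refine Finset.sum_congr rfl fun j _ => ?_
  rw [antipode_mul]
  noncomm_ring

lemma conv_mulRight_cunit (y : H) :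
    conv (LinearMap.mulRight k y ∘ₗ cunit) LinearMap.id = LinearMap.mulLeft k y := by
  ext z
  rw [conv_repr _ _ (ℛ k z), LinearMap.mulLeft_apply]
  calc ∑ i ∈ (ℛ k z).index,
        (LinearMap.mulRight k y ∘ₗ cunit) ((ℛ k z).left i) * LinearMap.id ((ℛ k z).right i)
      = ∑ i ∈ (ℛ k z).index, y *
          (Coalgebra.counit (R := k) ((ℛ k z).left i) • (ℛ k z).right i) := by
        refine Finset.sum_congr rfl fun i _ => ?_
        simp [cunit, Algebra.smul_def, mul_assoc, Algebra.commutes]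
    _ = y * z := by rw [← Finset.mul_sum, sum_counit_smul (ℛ k z)]

lemma gy_eq (y : H) : adAct k H ∘ₗ TensorProduct.mk k H H y =
    conv (LinearMap.mulRight k y ∘ₗ 𝒮) LinearMap.id := by
  ext z
  rw [LinearMap.comp_apply, TensorProduct.mk_apply, adAct_repr y z (ℛ k z),
    conv_repr _ _ (ℛ k z)]
  simp

lemma conv_id_gy (y : H) :
    conv LinearMap.id (adAct k H ∘ₗ TensorProduct.mk k H H y) = LinearMap.mulLeft k y := by
  rw [gy_eq, ← conv_assoc, conv_mulRight, conv_id_S, conv_mulRight_cunit]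

lemma self_distrib :
    adAct k H ∘ₗ TensorProduct.map (adAct k H) (LinearMap.id (M := H)) =
      adAct k H ∘ₗ TensorProduct.map (adAct k H) (adAct k H) ∘ₗ
        (TensorProduct.tensorTensorTensorComm k H H H H).toLinearMap ∘ₗ
        TensorProduct.map (LinearMap.id (M := H ⊗[k] H))
          (Coalgebra.comul (R := k) (A := H)) := by
  apply TensorProduct.ext
  apply TensorProduct.ext'
  intro x y
  ext z
  simp only [LinearMap.compr₂ₛₗ_apply, TensorProduct.mk_apply, LinearMap.comp_apply,
    TensorProduct.map_tmul, LinearMap.id_coe, id_eq, LinearEquiv.coe_coe]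
  rw [adAct_adAct]
  rw [← (ℛ k z).eq, tmul_sum, map_sum, map_sum, map_sum]
  simp only [TensorProduct.tensorTensorTensorComm_tmul, TensorProduct.map_tmul]
  calc adAct k H (x ⊗ₜ[k] (y * z))
      = adAct k H (x ⊗ₜ[k] (conv LinearMap.id (adAct k H ∘ₗ TensorProduct.mk k H H y) z)) := by
        rw [conv_id_gy, LinearMap.mulLeft_apply]
    _ = ∑ i ∈ (ℛ k z).index, adAct k H (x ⊗ₜ[k]
          ((ℛ k z).left i * adAct k H (y ⊗ₜ[k] (ℛ k z).right i))) := by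
        rw [conv_repr _ _ (ℛ k z)]
        simp only [LinearMap.id_coe, id_eq, LinearMap.comp_apply, TensorProduct.mk_apply]
        rw [tmul_sum, map_sum]
    _ = ∑ i ∈ (ℛ k z).index, adAct k H
          (adAct k H (x ⊗ₜ[k] (ℛ k z).left i) ⊗ₜ[k] adAct k H (y ⊗ₜ[k] (ℛ k z).right i)) := by
        refine Finset.sum_congr rfl fun i _ => ?_
        rw [adAct_adAct]

end Hopf4


section Hopf5
variable {H : Type} [Ring H] [HopfAlgebra k H]

local notation "𝒮" => HopfAlgebra.antipode (R := k) (A := H)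

lemma adAct_one_right (a : H) : adAct k H (a ⊗ₜ[k] (1 : H)) = a := by
  rw [adAct_repr a 1 (oneRepr (H := H))]
  simp [oneRepr, antipode_one]

lemma adAct_one_left (a : H) :
    adAct k H ((1 : H) ⊗ₜ[k] a) = Coalgebra.counit (R := k) a • (1 : H) := by
  rw [adAct_repr 1 a (ℛ k a)]
  simp only [mul_one]
  have h := HopfAlgebra.sum_antipode_mul_eq_smul (R := k) (ℛ k a)
  simpa using h

lemma counit_adAct (a b : H) :
    Coalgebra.counit (R := k) (adAct k H (a ⊗ₜ[k] b)) =
      Coalgebra.counit (R := k) a * Coalgebra.counit (R := k) b := by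
  rw [adAct_repr a b (ℛ k b), map_sum]
  calc ∑ i ∈ (ℛ k b).index,
        Coalgebra.counit (R := k) (𝒮 ((ℛ k b).left i) * a * (ℛ k b).right i)
      = ∑ i ∈ (ℛ k b).index, Coalgebra.counit (R := k) a *
          (Coalgebra.counit (R := k) ((ℛ k b).left i) *
            Coalgebra.counit (R := k) ((ℛ k b).right i)) := by
        refine Finset.sum_congr rfl fun i _ => ?_
        rw [Bialgebra.counit_mul, Bialgebra.counit_mul, counit_antipode]
        ring
    _ = Coalgebra.counit (R := k) a * Coalgebra.counit (R := k) b := by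
        rw [← Finset.mul_sum, sum_counit_counit (ℛ k b)]

end Hopf5

end RackAux

open RackAux in
/-- let `H` be a cocommutative Hopf algebra and `C ⊆ ker ε` a
Yetter-Drinfel'd submodule (closed under the right adjoint action and under the
coaction `h ↦ Δ(h) − 1 ⊗ h`).  Then `Ĉ := k·1 ⊕ C` is a rack bialgebra with
respect to the restriction of `Δ_H` and the adjoint action `◁`: it is a counital
coaugmented coalgebra, `◁` restricts to `Ĉ` and is a coalgebra morphism
satisfying self-distributivity, `x ◁ 1 = x`, `1 ◁ x = ε(x)·1` and
`ε(x ◁ y) = ε(x)ε(y)`. -/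
theorem yd_submodule_gives_rack_bialgebra (H : Type) [Ring H] [HopfAlgebra k H]
    (cocomm : (TensorProduct.comm k H H).toLinearMap ∘ₗ
        (Coalgebra.comul (R := k) (A := H)) = Coalgebra.comul)
    (C : Submodule k H)
    (hker : ∀ c ∈ C, Coalgebra.counit (R := k) c = 0)
    (hcoact : ∀ c ∈ C,
      Coalgebra.comul (R := k) c - (1 : H) ⊗ₜ[k] c ∈
        LinearMap.range (TensorProduct.map C.subtype (LinearMap.id (M := H))))
    (hadj : ∀ a ∈ C, ∀ b ∈ C, adAct k H (a ⊗ₜ[k] b) ∈ C) :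
    -- the coaugmented subcoalgebra Ĉ = k·1 ⊕ C
    ∀ Chat : Submodule k H, Chat = Submodule.span k {(1 : H)} ⊔ C →
      -- Ĉ is stable under the coproduct, i.e. it is a subcoalgebra
      (∀ a ∈ Chat, Coalgebra.comul (R := k) a ∈
        LinearMap.range (TensorProduct.map Chat.subtype Chat.subtype)) ∧
      -- `1` is a group-like coaugmentation of Ĉ
      (1 : H) ∈ Chat ∧
      Coalgebra.comul (R := k) (1 : H) = (1 : H) ⊗ₜ[k] (1 : H) ∧
      Coalgebra.counit (R := k) (1 : H) = (1 : k) ∧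
      -- `◁` restricts to Ĉ
      (∀ a ∈ Chat, ∀ b ∈ Chat, adAct k H (a ⊗ₜ[k] b) ∈ Chat) ∧
      -- `x ◁ 1 = x` and `1 ◁ x = ε(x)·1` on Ĉ
      (∀ a ∈ Chat, adAct k H (a ⊗ₜ[k] (1 : H)) = a) ∧
      (∀ a ∈ Chat, adAct k H ((1 : H) ⊗ₜ[k] a) =
        Coalgebra.counit (R := k) a • (1 : H)) ∧
      -- `ε(x ◁ y) = ε(x)ε(y)` on Ĉ
      (∀ a ∈ Chat, ∀ b ∈ Chat, Coalgebra.counit (R := k) (adAct k H (a ⊗ₜ[k] b)) =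
        Coalgebra.counit (R := k) a * Coalgebra.counit (R := k) b) ∧
      -- `◁` is a morphism of coalgebras
      ((Coalgebra.comul (R := k) (A := H)) ∘ₗ adAct k H =
        TensorProduct.map (adAct k H) (adAct k H) ∘ₗ
          (TensorProduct.tensorTensorTensorComm k H H H H).toLinearMap ∘ₗ
          TensorProduct.map (Coalgebra.comul (R := k) (A := H))
            (Coalgebra.comul (R := k) (A := H))) ∧
      -- self-distributivity `(x ◁ y) ◁ z = (x ◁ z₁) ◁ (y ◁ z₂)`
      (adAct k H ∘ₗ TensorProduct.map (adAct k H) (LinearMap.id (M := H)) =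
        adAct k H ∘ₗ TensorProduct.map (adAct k H) (adAct k H) ∘ₗ
          (TensorProduct.tensorTensorTensorComm k H H H H).toLinearMap ∘ₗ
          TensorProduct.map (LinearMap.id (M := H ⊗[k] H))
            (Coalgebra.comul (R := k) (A := H))) := by
  intro Chat hChat
  have hcoc : ∀ x : H, TensorProduct.comm k H H (Coalgebra.comul (R := k) x) =
      Coalgebra.comul (R := k) x := fun x => LinearMap.congr_fun cocomm x
  have h1C : (1 : H) ∈ Chat := by
    rw [hChat]; exact Submodule.mem_sup_left (Submodule.mem_span_singleton_self 1)
  have hCle : C ≤ Chat := by rw [hChat]; exact le_sup_right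
  obtain ⟨π, hπ⟩ := C.subtype.exists_leftInverse_of_injective C.ker_subtype
  have hrange1 : ∀ u ∈ LinearMap.range (TensorProduct.map C.subtype (LinearMap.id (M := H))),
      TensorProduct.map (C.subtype ∘ₗ π) LinearMap.id u = u := by
    rintro _ ⟨t, rfl⟩
    rw [← LinearMap.comp_apply, ← TensorProduct.map_comp, LinearMap.comp_assoc, hπ]
    simp only [LinearMap.comp_id, LinearMap.id_comp]
  have hrange2 : ∀ u ∈ LinearMap.range (TensorProduct.map (LinearMap.id (M := H)) C.subtype),
      TensorProduct.map LinearMap.id (C.subtype ∘ₗ π) u = u := by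
    rintro _ ⟨t, rfl⟩
    rw [← LinearMap.comp_apply, ← TensorProduct.map_comp, LinearMap.comp_assoc, hπ]
    simp only [LinearMap.comp_id, LinearMap.id_comp]
  have hcomm_range : ∀ u ∈ LinearMap.range (TensorProduct.map C.subtype (LinearMap.id (M := H))),
      TensorProduct.comm k H H u ∈
        LinearMap.range (TensorProduct.map (LinearMap.id (M := H)) C.subtype) := by
    rintro _ ⟨t, rfl⟩
    refine ⟨TensorProduct.comm k C H t, ?_⟩
    have h : TensorProduct.map (LinearMap.id (M := H)) C.subtype ∘ₗ
        (TensorProduct.comm k C H).toLinearMap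
        = (TensorProduct.comm k H H).toLinearMap ∘ₗ
          TensorProduct.map C.subtype (LinearMap.id (M := H)) :=
      TensorProduct.ext' fun c h => rfl
    exact LinearMap.congr_fun h t
  have hMain : ∀ c ∈ C, Coalgebra.comul (R := k) c ∈
      LinearMap.range (TensorProduct.map Chat.subtype Chat.subtype) := by
    intro c hc
    have hvr := hcoact c hc
    have hc1 : (c ⊗ₜ[k] (1 : H)) ∈
        LinearMap.range (TensorProduct.map C.subtype (LinearMap.id (M := H))) :=
      ⟨(⟨c, hc⟩ : C) ⊗ₜ[k] (1 : H), rfl⟩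
    have hu1 : Coalgebra.comul (R := k) c - (1 : H) ⊗ₜ[k] c - c ⊗ₜ[k] (1 : H) ∈
        LinearMap.range (TensorProduct.map C.subtype (LinearMap.id (M := H))) :=
      sub_mem hvr hc1
    have hueq : TensorProduct.comm k H H
        (Coalgebra.comul (R := k) c - (1 : H) ⊗ₜ[k] c - c ⊗ₜ[k] (1 : H)) =
        Coalgebra.comul (R := k) c - (1 : H) ⊗ₜ[k] c - c ⊗ₜ[k] (1 : H) := by
      rw [map_sub, map_sub, TensorProduct.comm_tmul, TensorProduct.comm_tmul, hcoc c]
      abel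
    have hu2 : Coalgebra.comul (R := k) c - (1 : H) ⊗ₜ[k] c - c ⊗ₜ[k] (1 : H) ∈
        LinearMap.range (TensorProduct.map (LinearMap.id (M := H)) C.subtype) := by
      rw [← hueq]; exact hcomm_range _ hu1
    have hPP : TensorProduct.map (C.subtype ∘ₗ π) (C.subtype ∘ₗ π)
        (Coalgebra.comul (R := k) c - (1 : H) ⊗ₜ[k] c - c ⊗ₜ[k] (1 : H)) =
        Coalgebra.comul (R := k) c - (1 : H) ⊗ₜ[k] c - c ⊗ₜ[k] (1 : H) := by
      have e1 : TensorProduct.map (C.subtype ∘ₗ π) (C.subtype ∘ₗ π)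
          = TensorProduct.map (C.subtype ∘ₗ π) LinearMap.id ∘ₗ
            TensorProduct.map LinearMap.id (C.subtype ∘ₗ π) := by
        rw [← TensorProduct.map_comp, LinearMap.comp_id, LinearMap.id_comp]
      rw [e1, LinearMap.comp_apply, hrange2 _ hu2, hrange1 _ hu1]
    have huChat : Coalgebra.comul (R := k) c - (1 : H) ⊗ₜ[k] c - c ⊗ₜ[k] (1 : H) ∈
        LinearMap.range (TensorProduct.map Chat.subtype Chat.subtype) := by
      refine ⟨TensorProduct.map (Submodule.inclusion hCle ∘ₗ π) (Submodule.inclusion hCle ∘ₗ π)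
        (Coalgebra.comul (R := k) c - (1 : H) ⊗ₜ[k] c - c ⊗ₜ[k] (1 : H)), ?_⟩
      rw [← LinearMap.comp_apply, ← TensorProduct.map_comp]
      have e2 : Chat.subtype ∘ₗ (Submodule.inclusion hCle ∘ₗ π) = C.subtype ∘ₗ π := by
        ext x; rfl
      rw [e2]
      exact hPP
    have h1c : (1 : H) ⊗ₜ[k] c ∈
        LinearMap.range (TensorProduct.map Chat.subtype Chat.subtype) :=
      ⟨(⟨1, h1C⟩ : Chat) ⊗ₜ[k] (⟨c, hCle hc⟩ : Chat), rfl⟩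
    have hc1' : c ⊗ₜ[k] (1 : H) ∈
        LinearMap.range (TensorProduct.map Chat.subtype Chat.subtype) :=
      ⟨(⟨c, hCle hc⟩ : Chat) ⊗ₜ[k] (⟨1, h1C⟩ : Chat), rfl⟩
    have hsplit : Coalgebra.comul (R := k) c =
        (Coalgebra.comul (R := k) c - (1 : H) ⊗ₜ[k] c - c ⊗ₜ[k] (1 : H)) +
          c ⊗ₜ[k] (1 : H) + (1 : H) ⊗ₜ[k] c := by abel
    rw [hsplit]
    exact add_mem (add_mem huChat hc1') h1c
  have part1 : ∀ a ∈ Chat, Coalgebra.comul (R := k) a ∈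
      LinearMap.range (TensorProduct.map Chat.subtype Chat.subtype) := by
    intro a ha
    rw [hChat] at ha
    obtain ⟨s, hs, c, hc, rfl⟩ := Submodule.mem_sup.mp ha
    obtain ⟨t, rfl⟩ := Submodule.mem_span_singleton.mp hs
    rw [map_add, map_smul]
    refine add_mem (Submodule.smul_mem _ _ ?_) (hMain c hc)
    rw [Bialgebra.comul_one, Algebra.TensorProduct.one_def]
    exact ⟨(⟨1, h1C⟩ : Chat) ⊗ₜ[k] (⟨1, h1C⟩ : Chat), rfl⟩
  have part5 : ∀ a ∈ Chat, ∀ b ∈ Chat, adAct k H (a ⊗ₜ[k] b) ∈ Chat := by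
    intro a ha b hb
    rw [hChat] at hb
    obtain ⟨s, hs, d, hd, rfl⟩ := Submodule.mem_sup.mp hb
    obtain ⟨t, rfl⟩ := Submodule.mem_span_singleton.mp hs
    rw [tmul_add, map_add, tmul_smul, map_smul]
    refine add_mem (Submodule.smul_mem _ _ ?_) ?_
    · rw [adAct_one_right]; exact ha
    · rw [hChat] at ha
      obtain ⟨s', hs', c, hc, rfl⟩ := Submodule.mem_sup.mp ha
      obtain ⟨t', rfl⟩ := Submodule.mem_span_singleton.mp hs'
      rw [add_tmul, map_add, ← smul_tmul', map_smul]
      refine add_mem (Submodule.smul_mem _ _ ?_) ?_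
      · rw [adAct_one_left, hker d hd, zero_smul]
        exact Submodule.zero_mem _
      · exact hCle (hadj c hc d hd)
  refine ⟨part1, h1C, ?_, Bialgebra.counit_one, part5, fun a _ => adAct_one_right a,
    fun a _ => adAct_one_left a, fun a _ b _ => counit_adAct a b, ?_, ?_⟩
  · rw [Bialgebra.comul_one, Algebra.TensorProduct.one_def]
  · exact comul_comp_adAct hcoc
  · exact self_distrib
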